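/- The pair of statistics (number of valleys, number of double rises) on Dyck paths of semilength n is jointly symmetric: the number of Dyck paths of semilength n with a valleys and b double rises equals the number with b valleys and a double rises. -/

import Mathlib

/-- A Dyck word: a list of booleans (`true` = up-step, `false` = down-step)
with equally many ups and downs, every prefix having at least as many ups as downs. -/
def IsDyck (w : List Bool) : Prop :=
  w.count true = w.count false ∧
    ∀ k < w.length, (w.take k).count false ≤ (w.take k).count true

instance : DecidablePred IsDyck := fun w => by unfold IsDyck; infer_instance

/-- Number of double rises (factors `uu`). -/
def numDR (w : List Bool) : ℕ :=
  ((List.range w.length).filter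
    (fun i => w.getD i false = true ∧ w.getD (i+1) false = true)).length

/-- Number of peaks (factors `ud`). -/
def numPeaks (w : List Bool) : ℕ :=
  ((List.range w.length).filter
    (fun i => i+1 < w.length ∧ w.getD i false = true ∧ w.getD (i+1) true = false)).length

/-- Number of valleys (factors `du`). -/
def numValleys (w : List Bool) : ℕ :=
  ((List.range w.length).filter
    (fun i => i+1 < w.length ∧ w.getD i true = false ∧ w.getD (i+1) false = true)).length

/-- Number of hills: peaks whose up-step starts at height 0. -/
def numHills (w : List Bool) : ℕ :=
  ((List.range w.length).filter
    (fun i => i+1 < w.length ∧ w.getD i false = true ∧ w.getD (i+1) true = false ∧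
      (w.take i).count true = (w.take i).count false)).length

/-- Number of peaks of height at least 2: peaks whose up-step starts at positive height. -/
def numPeaks2 (w : List Bool) : ℕ :=
  ((List.range w.length).filter
    (fun i => i+1 < w.length ∧ w.getD i false = true ∧ w.getD (i+1) true = false ∧
      (w.take i).count false < (w.take i).count true)).length

/-- Tunnels of a Dyck word, as pairs `(i, j)`: position `i` holds an up-step, position `j`
a down-step, and the factor strictly between them is a Dyck word (so `w = A u B d C` with
`|A| = i`, `|C| = w.length - j - 1`). -/
def tunnels (w : List Bool) : Finset (ℕ × ℕ) :=
  ((Finset.range w.length) ×ˢ (Finset.range w.length)).filter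
    (fun p => p.1 < p.2 ∧ w.getD p.1 false = true ∧ w.getD p.2 true = false ∧
      IsDyck ((w.drop (p.1+1)).take (p.2 - p.1 - 1)))

/-- Number of tunnels whose midpoint lies on the vertical line `x = n - r`
(for a path of length `2n`); the midpoint of tunnel `(i,j)` has x-coordinate `(i+j+1)/2`. -/
def ctr (r : ℤ) (w : List Bool) : ℕ :=
  ((tunnels w).filter (fun p => (p.1 : ℤ) + p.2 + 1 = (w.length : ℤ) - 2*r)).card

/-- Number of tunnels whose midpoint lies strictly to the left of the line `x = n - r`. -/
def ltr (r : ℤ) (w : List Bool) : ℕ :=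
  ((tunnels w).filter (fun p => (p.1 : ℤ) + p.2 + 1 < (w.length : ℤ) - 2*r)).card

/-- Number of centered tunnels. -/
def ctCount (w : List Bool) : ℕ := ctr 0 w

/-- Number of left tunnels. -/
def ltCount (w : List Bool) : ℕ := ltr 0 w

/-- `π` avoids the pattern 321. -/
def Avoids321 {n : ℕ} (π : Equiv.Perm (Fin n)) : Prop :=
  ¬ ∃ i j k : Fin n, i < j ∧ j < k ∧ π k < π j ∧ π j < π i

/-- `π` avoids the pattern 132. -/
def Avoids132 {n : ℕ} (π : Equiv.Perm (Fin n)) : Prop :=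
  ¬ ∃ i j k : Fin n, i < j ∧ j < k ∧ π i < π k ∧ π k < π j

/-- Number of fixed points. -/
noncomputable def fpCount {n : ℕ} (π : Equiv.Perm (Fin n)) : ℕ := Nat.card {i : Fin n // π i = i}

/-- Number of excedances. -/
noncomputable def excCount {n : ℕ} (π : Equiv.Perm (Fin n)) : ℕ := Nat.card {i : Fin n // i < π i}

/-- Number of weak excedances. -/
noncomputable def wexcCount {n : ℕ} (π : Equiv.Perm (Fin n)) : ℕ := Nat.card {i : Fin n // i ≤ π i}
section Dev

lemma isDyck_prefix {w : List Bool} (h : IsDyck w) (k : ℕ) :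
    (w.take k).count false ≤ (w.take k).count true := by
  rcases lt_or_ge k w.length with hk | hk
  · exact h.2 k hk
  · rw [List.take_of_length_le hk]; exact h.1.ge

lemma isDyck_iff (w : List Bool) : IsDyck w ↔
    (w.count true = w.count false ∧
      ∀ k, (w.take k).count false ≤ (w.take k).count true) := by
  constructor
  · exact fun h => ⟨h.1, isDyck_prefix h⟩
  · exact fun h => ⟨h.1, fun k _ => h.2 k⟩

lemma numDR_nil : numDR [] = 0 := rfl

lemma numValleys_nil : numValleys [] = 0 := rfl

lemma numDR_cons (a : Bool) (t : List Bool) :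
    numDR (a :: t) = (if a = true ∧ t.getD 0 false = true then 1 else 0) + numDR t := by
  unfold numDR
  rw [List.length_cons, List.range_succ_eq_map, List.filter_cons, List.filter_map]
  simp only [Function.comp_def, List.getD_cons_succ, List.getD_cons_zero]
  split <;> split <;> simp_all [List.length_map] <;> omega

lemma numValleys_cons (a : Bool) (t : List Bool) :
    numValleys (a :: t) = (if a = false ∧ t.getD 0 false = true then 1 else 0) + numValleys t := by
  unfold numValleys
  rw [List.length_cons, List.range_succ_eq_map, List.filter_cons, List.filter_map]
  simp only [Function.comp_def, List.getD_cons_succ, List.getD_cons_zero,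
    Nat.add_lt_add_iff_right]
  split <;> split <;> rename_i h1 h2
  · simp [List.length_map, Nat.add_comm]
  · exfalso; rcases t with _ | ⟨b, t⟩ <;> simp_all
  · exfalso; rcases t with _ | ⟨b, t⟩ <;> simp_all
  · simp [List.length_map]

lemma getD0_append (A B : List Bool) :
    (A ++ false :: B).getD 0 false = A.getD 0 false := by
  rcases A with _ | ⟨a, A⟩ <;> simp

lemma numDR_append (A B : List Bool) :
    numDR (A ++ false :: B) = numDR A + numDR B := by
  induction A with
  | nil => simp [numDR_cons, numDR_nil]
  | cons a A ih =>
      rw [List.cons_append, numDR_cons, ih, numDR_cons, getD0_append]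
      omega

lemma numValleys_append (A B : List Bool) :
    numValleys (A ++ false :: B) =
      numValleys A + numValleys B + (if B.getD 0 false = true then 1 else 0) := by
  induction A with
  | nil => simp [numValleys_cons, numValleys_nil]; omega
  | cons a A ih =>
      rw [List.cons_append, numValleys_cons, ih, numValleys_cons, getD0_append]
      omega

inductive DTree : Type
  | leaf : DTree
  | node : DTree → DTree → DTree
deriving DecidableEq

namespace DTree

def enc : DTree → List Bool
  | leaf => []
  | node l r => true :: (enc l ++ false :: enc r)

def sz : DTree → ℕ
  | leaf => 0
  | node l r => sz l + sz r + 1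

def drT : DTree → ℕ
  | leaf => 0
  | node l r => drT l + drT r + (if l = leaf then 0 else 1)

def vlT : DTree → ℕ
  | leaf => 0
  | node l r => vlT l + vlT r + (if r = leaf then 0 else 1)

def mir : DTree → DTree
  | leaf => leaf
  | node l r => node (mir r) (mir l)

lemma enc_getD0 (t : DTree) : ((enc t).getD 0 false = true) ↔ t ≠ leaf := by
  cases t <;> simp [enc]

lemma enc_length (t : DTree) : (enc t).length = 2 * sz t := by
  induction t with
  | leaf => simp [enc, sz]
  | node l r ihl ihr => simp [enc, sz]; omega

lemma numDR_enc (t : DTree) : numDR (enc t) = drT t := by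
  induction t with
  | leaf => simp [enc, numDR, drT]
  | node l r ihl ihr =>
      rw [enc, numDR_cons, getD0_append, numDR_append, ihl, ihr, drT]
      by_cases hl : l = leaf
      · subst hl; simp [enc]
      · simp only [(enc_getD0 l).2 hl, hl]
        simp
        omega

lemma numValleys_enc (t : DTree) : numValleys (enc t) = vlT t := by
  induction t with
  | leaf => simp [enc, numValleys, vlT]
  | node l r ihl ihr =>
      rw [enc, numValleys_cons, numValleys_append, ihl, ihr, vlT]
      by_cases hr : r = leaf
      · subst hr; simp [enc, numValleys_cons]
      · simp only [(enc_getD0 r).2 hr, hr]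
        simp
        try omega

lemma enc_isDyck (t : DTree) : IsDyck (enc t) := by
  induction t with
  | leaf => exact ⟨rfl, fun k hk => by simp [enc] at hk⟩
  | node l r ihl ihr =>
      rw [isDyck_iff] at ihl ihr ⊢
      constructor
      · simp [enc, List.count_append, List.count_cons]
        omega
      · intro k
        cases k with
        | zero => simp
        | succ j =>
            rw [enc, List.take_succ_cons, List.take_append]
            simp only [List.count_cons, List.count_append]
            have hA := ihl.2 j
            rcases Nat.eq_or_lt_of_le (Nat.zero_le (j - (enc l).length)) with hj | hj
            · rw [← hj]
              simp
              omega
            · have h2 : j - (enc l).length = (j - (enc l).length - 1) + 1 := by omega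
              rw [h2, List.take_succ_cons]
              simp only [List.count_cons]
              have hB := ihr.2 (j - (enc l).length - 1)
              simp
              omega

lemma dyck_split_length {A A' B B' : List Bool} (hA : IsDyck A) (hA' : IsDyck A')
    (h : A ++ false :: B = A' ++ false :: B') (hle : A.length ≤ A'.length) :
    A.length = A'.length := by
  by_contra hne
  have hlt : A.length < A'.length := lt_of_le_of_ne hle hne
  have htake : A'.take (A.length + 1) = A ++ [false] := by
    have h1 : (A' ++ false :: B').take (A.length + 1) = A'.take (A.length + 1) := by
      rw [List.take_append]
      have : A.length + 1 - A'.length = 0 := by omega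
      rw [this]
      simp
    rw [← h1, ← h, List.take_append]
    have : A.length + 1 - A.length = 1 := by omega
    rw [this]
    simp
  have := isDyck_prefix hA' (A.length + 1)
  rw [htake] at this
  simp [List.count_append] at this
  have h2 := hA.1
  omega

lemma dyck_split_unique {A A' B B' : List Bool} (hA : IsDyck A) (hA' : IsDyck A')
    (h : A ++ false :: B = A' ++ false :: B') : A = A' ∧ B = B' := by
  have hlen : A.length = A'.length := by
    rcases le_total A.length A'.length with hle | hle
    · exact dyck_split_length hA hA' h hle
    · exact (dyck_split_length hA' hA h.symm hle).symm
  obtain ⟨h1, h2⟩ := List.append_inj h hlen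
  exact ⟨h1, by injection h2⟩

lemma enc_inj : Function.Injective enc := by
  intro t
  induction t with
  | leaf =>
      intro t' h
      cases t' with
      | leaf => rfl
      | node l r => simp [enc] at h
  | node l r ihl ihr =>
      intro t' h
      cases t' with
      | leaf => simp [enc] at h
      | node l' r' =>
          rw [enc, enc] at h
          injection h with _ h
          obtain ⟨h1, h2⟩ := dyck_split_unique (enc_isDyck l) (enc_isDyck l') h
          rw [ihl h1, ihr h2]

lemma enc_surj : ∀ (n : ℕ) (w : List Bool), w.length = n → IsDyck w → ∃ t, enc t = w := by
  intro n
  induction n using Nat.strong_induction_on with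
  | _ n IH =>
      intro w hlen hw
      rcases w with _ | ⟨a, v⟩
      · exact ⟨leaf, rfl⟩
      · -- first char is true
        have ha : a = true := by
          by_contra hfa
          have := isDyck_prefix hw 1
          rcases a <;> simp_all
        subst ha
        -- counts on v
        have hcv : v.count false = v.count true + 1 := by
          have := hw.1
          simp [List.count_cons] at this
          omega
        set P : ℕ → Prop := fun m => (v.take m).count false = (v.take m).count true + 1 with hP
        have hex : ∃ m, P m := ⟨v.length, by rw [hP]; simp [List.take_of_length_le (le_refl _)]; exact hcv⟩
        set m := Nat.find hex with hm
        have hPm : P m := Nat.find_spec hex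
        have hmle : m ≤ v.length := Nat.find_min' hex (by rw [hP]; simp [List.take_of_length_le (le_refl _)]; exact hcv)
        have hm1 : 1 ≤ m := by
          rcases Nat.eq_zero_or_pos m with h0 | h0
          · rw [h0] at hPm; simp [hP] at hPm
          · exact h0
        -- prefixes before m
        have hpre : ∀ k < m, (v.take k).count false ≤ (v.take k).count true := by
          intro k hk
          have h1 : ((true :: v).take (k+1)).count false ≤ ((true :: v).take (k+1)).count true :=
            isDyck_prefix hw (k+1)
          rw [List.take_succ_cons] at h1
          simp [List.count_cons] at h1
          have h2 : ¬ P k := Nat.find_min hex hk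
          rw [hP] at h2
          omega
        have hmlt : m - 1 < v.length := by omega
        -- the char at m-1 is false
        have hsplit : v.take (m-1) ++ [v[m-1]] = v.take m := by
          have := List.take_concat_get hmlt
          simpa [List.concat_eq_append, Nat.sub_add_cancel hm1] using this
        have hchar : v[m-1] = false := by
          by_contra hc
          have hc' : v[m-1] = true := by rcases h : v[m-1] <;> simp_all
          have h1 := hpre (m-1) (by omega)
          have h2 := hPm
          rw [hP, ← hsplit] at h2
          simp [List.count_append, hc'] at h2
          omega
        have hbal : (v.take (m-1)).count false = (v.take (m-1)).count true := by
          have h2 := hPm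
          rw [hP, ← hsplit] at h2
          simp [List.count_append, hchar] at h2
          omega
        set A := v.take (m-1) with hA
        set B := v.drop m with hB
        have hvAB : v = A ++ false :: B := by
          rw [hA, hB]
          conv_lhs => rw [← List.take_append_drop (m-1) v]
          congr 1
          rw [List.drop_eq_getElem_cons hmlt, hchar, Nat.sub_add_cancel hm1]
        -- A is Dyck
        have hAd : IsDyck A := by
          rw [isDyck_iff]
          refine ⟨hbal.symm, fun k => ?_⟩
          rw [hA, List.take_take]
          exact hpre _ (by omega)
        -- count decomposition at m
        have hvm : v = v.take m ++ B := by rw [hB, List.take_append_drop]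
        have hctm : (v.take m).count false = (v.take m).count true + 1 := hPm
        -- B is Dyck
        have hBd : IsDyck B := by
          rw [isDyck_iff]
          constructor
          · have h1 : v.count false = (v.take m).count false + B.count false := by
              conv_lhs => rw [hvm]
              simp [List.count_append]
            have h2 : v.count true = (v.take m).count true + B.count true := by
              conv_lhs => rw [hvm]
              simp [List.count_append]
            omega
          · intro k
            have h1 : ((true :: v).take (m+k+1)).count false ≤ ((true :: v).take (m+k+1)).count true :=
              isDyck_prefix hw (m+k+1)
            rw [List.take_succ_cons, List.take_add] at h1
            simp [List.count_append, List.count_cons] at h1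
            rw [← hB] at h1
            omega
        -- induct
        have hn : v.length + 1 = n := by simpa using hlen
        have hlenA : A.length < n := by
          rw [hA, List.length_take]
          omega
        have hlenB : B.length < n := by
          rw [hB, List.length_drop]
          omega
        obtain ⟨tl, htl⟩ := IH A.length hlenA A rfl hAd
        obtain ⟨tr, htr⟩ := IH B.length hlenB B rfl hBd
        exact ⟨node tl tr, by rw [enc, htl, htr, ← hvAB]⟩

lemma mir_leaf_iff (t : DTree) : mir t = leaf ↔ t = leaf := by cases t <;> simp [mir]

lemma sz_mir (t : DTree) : sz (mir t) = sz t := by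
  induction t with
  | leaf => rfl
  | node l r ihl ihr => simp [mir, sz, ihl, ihr]; omega

lemma drT_mir (t : DTree) : drT (mir t) = vlT t := by
  induction t with
  | leaf => rfl
  | node l r ihl ihr => simp [mir, drT, vlT, ihl, ihr, mir_leaf_iff]; omega

lemma vlT_mir (t : DTree) : vlT (mir t) = drT t := by
  induction t with
  | leaf => rfl
  | node l r ihl ihr => simp [mir, drT, vlT, ihl, ihr, mir_leaf_iff]; omega

lemma mir_mir (t : DTree) : mir (mir t) = t := by
  induction t with
  | leaf => rfl
  | node l r ihl ihr => simp [mir, ihl, ihr]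

end DTree

open DTree in
noncomputable def wordTreeEquiv (n a b : ℕ) :
    {t : DTree // sz t = n ∧ vlT t = a ∧ drT t = b} ≃
    {w : List Bool // w.length = 2 * n ∧ IsDyck w ∧ numValleys w = a ∧ numDR w = b} := by
  apply Equiv.ofBijective (fun t => ⟨enc t.1, by rw [enc_length, t.2.1], enc_isDyck _,
    by rw [numValleys_enc, t.2.2.1], by rw [numDR_enc, t.2.2.2]⟩)
  constructor
  · intro t t' h
    exact Subtype.ext (enc_inj (congrArg Subtype.val h))
  · rintro ⟨w, hlen, hw, hv, hd⟩
    obtain ⟨t, ht⟩ := enc_surj w.length w rfl hw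
    refine ⟨⟨t, ?_, ?_, ?_⟩, Subtype.ext ht⟩
    · have := enc_length t; rw [ht, hlen] at this; omega
    · rw [← numValleys_enc, ht, hv]
    · rw [← numDR_enc, ht, hd]

open DTree in
def mirEquiv (n a b : ℕ) :
    {t : DTree // sz t = n ∧ vlT t = a ∧ drT t = b} ≃
    {t : DTree // sz t = n ∧ vlT t = b ∧ drT t = a} where
  toFun t := ⟨mir t.1, by rw [sz_mir, t.2.1], by rw [vlT_mir, t.2.2.2], by rw [drT_mir, t.2.2.1]⟩
  invFun t := ⟨mir t.1, by rw [sz_mir, t.2.1], by rw [vlT_mir, t.2.2.2], by rw [drT_mir, t.2.2.1]⟩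
  left_inv t := Subtype.ext (mir_mir t.1)
  right_inv t := Subtype.ext (mir_mir t.1)

/-- The joint distribution of (valleys, double rises) on Dyck paths of semilength `n`
is symmetric. -/
theorem stmt6 (n a b : ℕ) :
    Nat.card {w : List Bool // w.length = 2 * n ∧ IsDyck w ∧
        numValleys w = a ∧ numDR w = b} =
    Nat.card {w : List Bool // w.length = 2 * n ∧ IsDyck w ∧
        numValleys w = b ∧ numDR w = a} := by
  rw [← Nat.card_congr (wordTreeEquiv n a b), ← Nat.card_congr (wordTreeEquiv n b a)]
  exact Nat.card_congr (mirEquiv n a b)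


end Dev
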